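/- Let m, k ≥ 1 be integers. Let z be a vertex and W a set of vertices not containing z with |W| ≥ (mk)^k. For each w ∈ W let P_w be a path of length k from z to w. Then there exist j ∈ [k], a vertex x, and m vertices w_1, …, w_m ∈ W such that the segments P_{w_i}[x, w_i] form a family of m paths of length j, every two of which share only the vertex x (i.e., their union is a balanced spider of height j with center x and m legs). -/

import Mathlib

private theorem geom_aux (c j : ℕ) (hc : 1 ≤ c) :
    (c - 1) * (∑ s ∈ Finset.range j, c ^ s) + 1 = c ^ j := by
  induction j with
  | zero => simp
  | succ j ih =>
    rw [Finset.sum_range_succ, Nat.mul_add]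
    have h1 : c ^ j ≤ c * c ^ j := Nat.le_mul_of_pos_left _ hc
    have h2 : (c - 1) * c ^ j = c * c ^ j - c ^ j := Nat.sub_one_mul c (c ^ j)
    have h3 : c ^ (j + 1) = c * c ^ j := by ring
    set S := ∑ s ∈ Finset.range j, c ^ s
    have h4 : (c - 1) * S = c * S - S := Nat.sub_one_mul c S
    have h5 : S ≤ c * S := Nat.le_mul_of_pos_left _ hc
    omega

/-- spider lemma, Lemma 3.9 of the paper.
If `z` is a vertex, `W` a set of vertices not containing `z` with
`|W| ≥ (mk)^k`, and for each `w ∈ W` we have a `z,w`-path `P w` of length `k`,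
then for some `j ∈ [k]` there are a vertex `x` and `m` vertices `w ∈ W` whose
terminal segments `P w [x, w]` are paths of length `j` every two of which share
only the vertex `x` (their union is a balanced spider of height `j`). -/
theorem stmt_4 {V : Type*} [DecidableEq V] (G : SimpleGraph V) (k m : ℕ)
    (hk : 1 ≤ k) (hm : 1 ≤ m)
    (z : V) (W : Finset V) (hzW : z ∉ W)
    (hW : (m * k) ^ k ≤ W.card)
    (P : V → List V)
    (hlen : ∀ w ∈ W, (P w).length = k + 1)
    (hpath : ∀ w ∈ W, (P w).Chain' G.Adj ∧ (P w).Nodup)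
    (hends : ∀ w ∈ W, (P w).head? = some z ∧ (P w).getLast? = some w) :
    ∃ j, 1 ≤ j ∧ j ≤ k ∧ ∃ x : V, ∃ T ⊆ W, T.card = m ∧
      (∀ w ∈ T, ((P w).drop (k - j)).head? = some x) ∧
      ∀ w ∈ T, ∀ w' ∈ T, w ≠ w' →
        ∀ v, v ∈ (P w).drop (k - j) → v ∈ (P w').drop (k - j) → v = x := by
  classical
  set c := m * k with hc
  have hc1 : 1 ≤ c := Nat.one_le_iff_ne_zero.mpr (Nat.mul_ne_zero (by omega) (by omega))
  -- basic getElem facts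
  have hget0 : ∀ w ∈ W, (P w)[0]? = some z := by
    intro w hw
    have h := (hends w hw).1
    rwa [List.head?_eq_getElem?] at h
  have hgetk : ∀ w ∈ W, (P w)[k]? = some w := by
    intro w hw
    have h := (hends w hw).2
    rwa [List.getLast?_eq_getElem?, hlen w hw, Nat.add_sub_cancel] at h
  -- the level sets
  set N : ℕ → V → Finset V := fun ℓ v => W.filter (fun w => (P w)[ℓ]? = some v) with hN
  have hNmem : ∀ ℓ v w, w ∈ N ℓ v ↔ w ∈ W ∧ (P w)[ℓ]? = some v := by
    intro ℓ v w; rw [hN]; simp [Finset.mem_filter]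
  have hNk : ∀ u : V, (N k u).card ≤ 1 := by
    intro u
    apply Finset.card_le_one.mpr
    intro a ha b hb
    rw [hNmem] at ha hb
    have h1 := hgetk a ha.1
    have h2 := hgetk b hb.1
    rw [ha.2] at h1
    rw [hb.2] at h2
    rw [← Option.some_inj.mp h1, ← Option.some_inj.mp h2]
  -- the set of good levels
  set S : Finset ℕ := (Finset.range k).filter
    (fun ℓ => ∃ v, c ^ (k - ℓ) ≤ (N ℓ v).card) with hS
  have h0S : 0 ∈ S := by
    rw [hS, Finset.mem_filter, Finset.mem_range]
    refine ⟨by omega, ⟨z, ?_⟩⟩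
    have : N 0 z = W := by
      rw [hN]
      exact Finset.filter_true_of_mem (fun w hw => hget0 w hw)
    rw [this]
    simpa using hW
  have hSne : S.Nonempty := ⟨0, h0S⟩
  set ℓ₀ := S.max' hSne with hℓ₀def
  have hℓ₀S : ℓ₀ ∈ S := S.max'_mem hSne
  rw [hS, Finset.mem_filter, Finset.mem_range] at hℓ₀S
  obtain ⟨hℓ₀k, x, hx⟩ := hℓ₀S
  have hmax : ∀ ℓ u, ℓ₀ < ℓ → ℓ < k → (N ℓ u).card < c ^ (k - ℓ) := by
    intro ℓ u h1 h2
    by_contra h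
    push_neg at h
    have : ℓ ∈ S := by
      rw [hS, Finset.mem_filter, Finset.mem_range]
      exact ⟨h2, u, h⟩
    exact absurd (S.le_max' ℓ this) (by omega)
  have hsmall : ∀ ℓ u, ℓ₀ < ℓ → ℓ ≤ k → (N ℓ u).card ≤ c ^ (k - ℓ) := by
    intro ℓ u h1 h2
    rcases eq_or_lt_of_le h2 with h3 | h3
    · subst h3; simpa using hNk u
    · exact le_of_lt (hmax ℓ u h1 h3)
  set j := k - ℓ₀ with hjdef
  have hj1 : 1 ≤ j := by omega
  have hjk : j ≤ k := by omega
  have hkj : k - j = ℓ₀ := by omega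
  set A := N ℓ₀ x with hA
  have hAcard : c ^ j ≤ A.card := hx
  have hAW : A ⊆ W := by rw [hA, hN]; exact Finset.filter_subset _ _
  have hxA : ∀ w ∈ A, (P w)[ℓ₀]? = some x := fun w hw => ((hNmem ℓ₀ x w).mp hw).2
  have hcons : ∀ w ∈ A, (P w).drop ℓ₀ = x :: (P w).drop (ℓ₀ + 1) := by
    intro w hw
    have hl : ℓ₀ < (P w).length := by rw [hlen w (hAW hw)]; omega
    obtain ⟨h1, h2⟩ := List.getElem?_eq_some_iff.mp (hxA w hw)
    rw [List.drop_eq_getElem_cons hl, h2]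
  have hmem_drop : ∀ w ∈ A, ∀ u, u ∈ (P w).drop (ℓ₀ + 1) →
      ∃ ℓ, ℓ₀ + 1 ≤ ℓ ∧ ℓ ≤ k ∧ (P w)[ℓ]? = some u := by
    intro w hw u hu
    rw [List.mem_iff_getElem] at hu
    obtain ⟨i, hi, hval⟩ := hu
    have hli : ((P w).drop (ℓ₀ + 1)).length = k - ℓ₀ := by
      rw [List.length_drop, hlen w (hAW hw)]; omega
    refine ⟨ℓ₀ + 1 + i, by omega, by omega, ?_⟩
    rw [show ℓ₀ + 1 + i = (ℓ₀ + 1) + i from rfl, ← List.getElem?_drop]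
    exact List.getElem?_eq_some_iff.mpr ⟨hi, hval⟩
  set G := ∑ s ∈ Finset.range j, c ^ s with hG
  have hIcc : ∑ ℓ ∈ Finset.Icc (ℓ₀ + 1) k, c ^ (k - ℓ) = G := by
    rw [hG]
    refine Finset.sum_nbij' (fun ℓ => k - ℓ) (fun s => k - s) ?_ ?_ ?_ ?_ ?_
    · intro a ha; simp only [Finset.mem_Icc] at ha; simp only [Finset.mem_range]; omega
    · intro a ha; simp only [Finset.mem_range] at ha; simp only [Finset.mem_Icc]; omega
    · intro a ha; simp only [Finset.mem_Icc] at ha; omega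
    · intro a ha; simp only [Finset.mem_range] at ha; omega
    · intro a ha; rfl
  -- the kill bound
  have hkill : ∀ w ∈ A, (A.filter (fun b => ∃ u, u ≠ x ∧
      u ∈ (P w).drop ℓ₀ ∧ u ∈ (P b).drop ℓ₀)).card ≤ j * G := by
    intro w hw
    have hsub : A.filter (fun b => ∃ u, u ≠ x ∧ u ∈ (P w).drop ℓ₀ ∧ u ∈ (P b).drop ℓ₀) ⊆
        ((P w).drop (ℓ₀ + 1)).toFinset.biUnion
          (fun u => (Finset.Icc (ℓ₀ + 1) k).biUnion (fun ℓ => N ℓ u)) := by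
      intro b hb
      rw [Finset.mem_filter] at hb
      obtain ⟨hbA, u, hux, huw, hub⟩ := hb
      rw [hcons w hw, List.mem_cons] at huw
      rcases huw with h | huw; · exact absurd h hux
      rw [hcons b hbA, List.mem_cons] at hub
      rcases hub with h | hub; · exact absurd h hux
      obtain ⟨ℓ, hℓ1, hℓ2, hℓval⟩ := hmem_drop b hbA u hub
      refine Finset.mem_biUnion.mpr ⟨u, List.mem_toFinset.mpr huw,
        Finset.mem_biUnion.mpr ⟨ℓ, Finset.mem_Icc.mpr ⟨hℓ1, hℓ2⟩, ?_⟩⟩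
      exact (hNmem ℓ u b).mpr ⟨hAW hbA, hℓval⟩
    calc (A.filter _).card
        ≤ _ := Finset.card_le_card hsub
      _ ≤ ∑ u ∈ ((P w).drop (ℓ₀ + 1)).toFinset,
            ((Finset.Icc (ℓ₀ + 1) k).biUnion (fun ℓ => N ℓ u)).card :=
          Finset.card_biUnion_le
      _ ≤ ∑ u ∈ ((P w).drop (ℓ₀ + 1)).toFinset, ∑ ℓ ∈ Finset.Icc (ℓ₀ + 1) k, (N ℓ u).card :=
          Finset.sum_le_sum (fun u _ => Finset.card_biUnion_le)
      _ ≤ ∑ u ∈ ((P w).drop (ℓ₀ + 1)).toFinset, ∑ ℓ ∈ Finset.Icc (ℓ₀ + 1) k, c ^ (k - ℓ) := by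
          refine Finset.sum_le_sum (fun u _ => Finset.sum_le_sum (fun ℓ hℓ => ?_))
          rw [Finset.mem_Icc] at hℓ
          exact hsmall ℓ u (by omega) hℓ.2
      _ = ((P w).drop (ℓ₀ + 1)).toFinset.card * G := by rw [Finset.sum_const, hIcc, smul_eq_mul]
      _ ≤ j * G := by
          refine Nat.mul_le_mul_right _ ?_
          calc ((P w).drop (ℓ₀ + 1)).toFinset.card ≤ ((P w).drop (ℓ₀ + 1)).length :=
              List.toFinset_card_le _
            _ = j := by rw [List.length_drop, hlen w (hAW hw)]; omega
  -- each w ∈ A has itself (≠ x) in its suffix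
  have hself : ∀ w ∈ A, w ∈ (P w).drop ℓ₀ := by
    intro w hw
    have h : ((P w).drop ℓ₀)[k - ℓ₀]? = some w := by
      rw [List.getElem?_drop, show ℓ₀ + (k - ℓ₀) = k by omega]
      exact hgetk w (hAW hw)
    obtain ⟨h1, h2⟩ := List.getElem?_eq_some_iff.mp h
    have hmem := List.getElem_mem h1
    rwa [h2] at hmem
  have hwnex : ∀ w ∈ A, w ≠ x := by
    intro w hw hwx
    have h1 : (P w)[ℓ₀]? = (P w)[k]? := by rw [hxA w hw, hgetk w (hAW hw), hwx]
    have h2 : ℓ₀ < (P w).length := by rw [hlen w (hAW hw)]; omega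
    exact absurd ((List.getElem?_inj h2 (hpath w (hAW hw)).2).mp h1) (by omega)
  -- the greedy construction
  have claim : ∀ t, t ≤ m → ∃ T : Finset V, T ⊆ A ∧ T.card = t ∧
      (∀ w ∈ T, ∀ w' ∈ T, w ≠ w' →
        ∀ v, v ∈ (P w).drop ℓ₀ → v ∈ (P w').drop ℓ₀ → v = x) := by
    intro t
    induction t with
    | zero => exact fun _ => ⟨∅, by simp⟩
    | succ t ih =>
      intro ht
      obtain ⟨T, hTA, hTcard, hTgood⟩ := ih (by omega)
      set K := T.biUnion (fun a => A.filter (fun b => ∃ u, u ≠ x ∧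
        u ∈ (P a).drop ℓ₀ ∧ u ∈ (P b).drop ℓ₀)) with hK
      have hmj : (m - 1) * j ≤ c - 1 := by
        have h2 : (m - 1) * k = m * k - k := Nat.sub_one_mul m k
        have h3 : k ≤ m * k := Nat.le_mul_of_pos_left k hm
        have h4 : (m - 1) * j ≤ (m - 1) * k := Nat.mul_le_mul_left _ hjk
        omega
      have hKcard : K.card < A.card := by
        have hgeom : (c - 1) * G + 1 = c ^ j := geom_aux c j hc1
        calc K.card
            ≤ ∑ a ∈ T, (A.filter (fun b => ∃ u, u ≠ x ∧
                u ∈ (P a).drop ℓ₀ ∧ u ∈ (P b).drop ℓ₀)).card := Finset.card_biUnion_le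
          _ ≤ ∑ _a ∈ T, j * G := Finset.sum_le_sum (fun a ha => hkill a (hTA ha))
          _ = t * (j * G) := by rw [Finset.sum_const, hTcard, smul_eq_mul]
          _ ≤ (m - 1) * (j * G) := Nat.mul_le_mul_right _ (by omega)
          _ = ((m - 1) * j) * G := (mul_assoc _ _ _).symm
          _ ≤ (c - 1) * G := Nat.mul_le_mul_right _ hmj
          _ < c ^ j := by omega
          _ ≤ A.card := hAcard
      have hKA : K ⊆ A := Finset.biUnion_subset.mpr (fun a _ => Finset.filter_subset _ _)
      have hnotsub : ¬ A ⊆ K := fun h => absurd (Finset.card_le_card h) (by omega)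
      obtain ⟨w, hwA, hwK⟩ := Finset.not_subset.mp hnotsub
      have hwT : w ∉ T := by
        intro hwT
        exact hwK (Finset.mem_biUnion.mpr ⟨w, hwT, Finset.mem_filter.mpr
          ⟨hwA, w, hwnex w hwA, hself w hwA, hself w hwA⟩⟩)
      refine ⟨insert w T, Finset.insert_subset hwA hTA, ?_, ?_⟩
      · rw [Finset.card_insert_of_notMem hwT, hTcard]
      · intro a ha b hb hab v hva hvb
        rw [Finset.mem_insert] at ha hb
        by_contra hvx
        rcases ha with ha | ha <;> rcases hb with hb | hb
        · exact hab (ha.trans hb.symm)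
        · exact hwK (Finset.mem_biUnion.mpr ⟨b, hb, Finset.mem_filter.mpr
            ⟨hwA, v, hvx, hvb, ha ▸ hva⟩⟩)
        · exact hwK (Finset.mem_biUnion.mpr ⟨a, ha, Finset.mem_filter.mpr
            ⟨hwA, v, hvx, hva, hb ▸ hvb⟩⟩)
        · exact hvx (hTgood a ha b hb hab v hva hvb)
  obtain ⟨T, hTA, hTcard, hTgood⟩ := claim m le_rfl
  refine ⟨j, hj1, hjk, x, T, fun y hy => hAW (hTA hy), hTcard, ?_, ?_⟩
  · intro w hw
    rw [hkj, hcons w (hTA hw)]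
    rfl
  · intro w hw w' hw' hne v hv hv'
    rw [hkj] at hv hv'
    exact hTgood w hw w' hw' hne v hv hv'
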